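/- arXiv:1111.5075 — 3 statements merged into one kernel-verified Lean document; each statement's English description precedes it below -/
import Mathlib

section
/- Let w be a nonnegative locally integrable function on ℝⁿ and 0 < p < 1. Suppose {f_j}_{j∈ℤ} is a sequence of measurable functions on ℝⁿ satisfying w({x ∈ ℝⁿ : |f_j(x)| > α}) ≤ α^{−p} for all α > 0 and all j ∈ ℤ, and {λ_j}_{j∈ℤ} are real numbers with Σ_j |λ_j|^p ≤ 1. Then the series Σ_j λ_j f_j(x) converges absolutely for w-almost every x, and w({x ∈ ℝⁿ : |Σ_j λ_j f_j(x)| > α}) ≤ ((2−p)/(1−p))·α^{−p} for all α > 0. -/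
open MeasureTheory Metric Set ENNReal
open scoped Classical

noncomputable section

abbrev Rn (n : ℕ) : Type := EuclideanSpace ℝ (Fin n)

/-- Axis-parallel cube centered at `c` with side length `r`. -/
def cube {n : ℕ} (c : Rn n) (r : ℝ) : Set (Rn n) := {x | ∀ i, |x i - c i| ≤ r / 2}

/-- The measure `w(E) = ∫_E w` with density `w` w.r.t. Lebesgue measure. -/
def wm {n : ℕ} (w : Rn n → ℝ) : Measure (Rn n) :=
  volume.withDensity (fun x => ENNReal.ofReal (w x))

/-- Muckenhoupt `A_q` condition for `q > 1`. -/
def IsAq {n : ℕ} (w : Rn n → ℝ) (q : ℝ) : Prop :=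
  (∀ x, 0 ≤ w x) ∧ LocallyIntegrable w volume ∧
  ∃ C > 0, ∀ (c : Rn n) (r : ℝ), 0 < r →
    (((volume (cube c r)).toReal⁻¹ * ∫ x in cube c r, w x) *
      (((volume (cube c r)).toReal⁻¹ * ∫ x in cube c r, w x ^ (-1 / (q - 1))) ^ (q - 1))) ≤ C

/-- Muckenhoupt `A_1` condition. -/
def IsA1 {n : ℕ} (w : Rn n → ℝ) : Prop :=
  (∀ x, 0 ≤ w x) ∧ LocallyIntegrable w volume ∧
  ∃ C > 0, ∀ (c : Rn n) (r : ℝ), 0 < r →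
    ∀ᵐ y ∂(volume.restrict (cube c r)),
      (volume (cube c r)).toReal⁻¹ * ∫ x in cube c r, w x ≤ C * w y

/-- Muckenhoupt `A_q` condition for `q ≥ 1`. -/
def IsMuckenhoupt {n : ℕ} (w : Rn n → ℝ) (q : ℝ) : Prop :=
  if q = 1 then IsA1 w else IsAq w q

/-- The parametric Marcinkiewicz integral `μ^ρ_Ω`. -/
def marc {n : ℕ} (ρ : ℝ) (Ω f : Rn n → ℝ) (x : Rn n) : ℝ :=
  (∫ t in Ioi (0:ℝ),
      (∫ y in {y : Rn n | dist x y ≤ t}, Ω (x - y) * ‖x - y‖ ^ (ρ - (n:ℝ)) * f y) ^ 2 *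
        t ^ (-(2 * ρ + 1))) ^ ((1:ℝ)/2)

/-- `Ω` is homogeneous of degree zero. -/
def HomZero {n : ℕ} (Ω : Rn n → ℝ) : Prop :=
  ∀ t : ℝ, 0 < t → ∀ x : Rn n, x ≠ 0 → Ω (t • x) = Ω x

/-- `Ω` has mean value zero on the unit sphere `S^{n-1}`. -/
def MeanZero {n : ℕ} (Ω : Rn n → ℝ) : Prop :=
  ∫ x : Metric.sphere (0 : Rn n) 1, Ω (x : Rn n) ∂((volume : Measure (Rn n)).toSphere) = 0

/-- `Ω ∈ Lip_α(S^{n-1})` with Lipschitz constant `L`. -/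
def LipSphere {n : ℕ} (Ω : Rn n → ℝ) (α L : ℝ) : Prop :=
  ∀ x y : Rn n, ‖x‖ = 1 → ‖y‖ = 1 → |Ω x - Ω y| ≤ L * ‖x - y‖ ^ α

/-- `a` is a `w`-`(p,q,0)`-atom supported in the cube `Q(x₀, r)`. -/
def IsAtomOn {n : ℕ} (w : Rn n → ℝ) (p q : ℝ) (a : Rn n → ℝ) (x₀ : Rn n) (r : ℝ) : Prop :=
  Measurable a ∧ Integrable a volume ∧
  (∀ x, x ∉ cube x₀ r → a x = 0) ∧
  (∫ x in cube x₀ r, |a x| ^ q * w x) ^ (1/q) ≤ (∫ x in cube x₀ r, w x) ^ (1/q - 1/p) ∧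
  (∫ x, a x) = 0

/-- `a` is a `w`-`(p,q,0)`-atom. -/
def IsWAtom {n : ℕ} (w : Rn n → ℝ) (p q : ℝ) (a : Rn n → ℝ) : Prop :=
  ∃ (x₀ : Rn n) (r : ℝ), 0 < r ∧ IsAtomOn w p q a x₀ r

/-- The weighted `L^p` (quasi-)norm `‖f‖_{L^p_w} = (∫ |f|^p w)^{1/p}`. -/
def wLp {n : ℕ} (w : Rn n → ℝ) (p : ℝ) (f : Rn n → ℝ) : ℝ≥0∞ :=
  (∫⁻ x, ENNReal.ofReal (|f x| ^ p * w x)) ^ (1/p)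



lemma trunc_lintegral {X : Type*} [MeasurableSpace X] (μ : Measure X) (p : ℝ)
    (hp0 : 0 < p) (hp1 : p < 1) (f : X → ℝ) (hfm : Measurable f)
    (hf : ∀ s : ℝ, 0 < s → μ {x | s < |f x|} ≤ ENNReal.ofReal (s ^ (-p)))
    (t : ℝ) (ht : 0 < t) :
    ∫⁻ x, ENNReal.ofReal (if |f x| ≤ t then |f x| else 0) ∂μ ≤
      ENNReal.ofReal (t ^ (1 - p) / (1 - p)) := by
  set u : X → ℝ := fun x => if |f x| ≤ t then |f x| else 0 with hu
  have hu_nn : ∀ x, 0 ≤ u x := fun x => by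
    simp only [hu]; split <;> positivity
  have hu_m : Measurable u := Measurable.ite (measurableSet_le hfm.abs measurable_const)
    hfm.abs measurable_const
  rw [lintegral_eq_lintegral_meas_lt μ (ae_of_all _ hu_nn) hu_m.aemeasurable]
  have hmono : ∫⁻ s in Ioi (0:ℝ), μ {x | s < u x} ≤
      ∫⁻ s in Ioi (0:ℝ), (Ioc (0:ℝ) t).indicator (fun s => ENNReal.ofReal (s ^ (-p))) s := by
    refine setLIntegral_mono' measurableSet_Ioi (fun s hs => ?_)
    rcases le_or_gt s t with hst | hst
    · rw [indicator_of_mem (by exact ⟨hs, hst⟩)]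
      refine le_trans (measure_mono ?_) (hf s hs)
      intro x hx
      simp only [hu, mem_setOf_eq] at hx ⊢
      split at hx
      · exact hx
      · exact absurd hx (asymm (show (0:ℝ) < s from hs))
    · have : {x | s < u x} = ∅ := by
        ext x; simp only [hu, mem_setOf_eq, mem_empty_iff_false, iff_false, not_lt]
        split
        · linarith
        · linarith
      rw [this]; simp
  refine hmono.trans ?_
  rw [lintegral_indicator measurableSet_Ioc, Measure.restrict_restrict measurableSet_Ioc,
    Ioc_inter_Ioi, sup_of_le_left le_rfl]
  have hint : IntegrableOn (fun s : ℝ => s ^ (-p)) (Ioc 0 t) volume := by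
    rw [← intervalIntegrable_iff_integrableOn_Ioc_of_le ht.le]
    exact intervalIntegral.intervalIntegrable_rpow' (by linarith)
  rw [← ofReal_integral_eq_lintegral_ofReal hint
    ((ae_restrict_iff' measurableSet_Ioc).2 (ae_of_all _ (fun s hs => Real.rpow_nonneg hs.1.le _)))]
  have : ∫ s in Ioc (0:ℝ) t, s ^ (-p) = t ^ (1 - p) / (1 - p) := by
    rw [← intervalIntegral.integral_of_le ht.le, integral_rpow (Or.inl (by linarith))]
    rw [Real.zero_rpow (by linarith : -p + 1 ≠ 0)]
    ring_nf
  rw [this]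

lemma weak_claim {X : Type*} [MeasurableSpace X] (μ : Measure X) (p : ℝ)
    (hp0 : 0 < p) (hp1 : p < 1)
    (f : ℤ → X → ℝ) (hfm : ∀ j, Measurable (f j))
    (hf : ∀ j : ℤ, ∀ a : ℝ, 0 < a → μ {x | a < |f j x|} ≤ ENNReal.ofReal (a ^ (-p)))
    (lam : ℤ → ℝ) (hsum : Summable fun j => |lam j| ^ p)
    (hle : (∑' j : ℤ, |lam j| ^ p) ≤ 1) (α : ℝ) (hα : 0 < α) :
    μ {x | ENNReal.ofReal α < ∑' j : ℤ, ENNReal.ofReal |lam j * f j x|} ≤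
      ENNReal.ofReal ((2 - p) / (1 - p) * α ^ (-p)) := by
  classical
  set c : ℝ≥0∞ := ENNReal.ofReal α with hc
  have hc0 : c ≠ 0 := (ENNReal.ofReal_pos.2 hα).ne'
  set h : ℤ → X → ℝ≥0∞ := fun j x => ENNReal.ofReal |lam j * f j x| with hh
  have hhm : ∀ j, Measurable (h j) := fun j =>
    ENNReal.measurable_ofReal.comp ((measurable_const.mul (hfm j)).abs)
  set g : ℤ → X → ℝ≥0∞ := fun j x => if h j x ≤ c then h j x else 0 with hg
  set b : ℤ → X → ℝ≥0∞ := fun j x => if c < h j x then h j x else 0 with hb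
  have hgm : ∀ j, Measurable (g j) := fun j =>
    Measurable.ite (measurableSet_le (hhm j) measurable_const) (hhm j) measurable_const
  set G : X → ℝ≥0∞ := fun x => ∑' j, g j x with hG
  set B : X → ℝ≥0∞ := fun x => ∑' j, b j x with hB
  have hsplit : ∀ x, (∑' j : ℤ, h j x) = G x + B x := by
    intro x
    rw [hG, hB, ← ENNReal.tsum_add]
    refine tsum_congr fun j => ?_
    by_cases hcx : h j x ≤ c
    · simp [hg, hb, hcx, not_lt.2 hcx]
    · simp [hg, hb, hcx, lt_of_not_ge hcx]
  have hsubset : {x | c < ∑' j : ℤ, h j x} ⊆ {x | B x ≠ 0} ∪ {x | c ≤ G x} := by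
    intro x hx
    by_contra hcon
    simp only [mem_union, mem_setOf_eq, not_or, not_not, not_le] at hcon
    obtain ⟨h1, h2⟩ := hcon
    rw [mem_setOf_eq, hsplit x, h1, add_zero] at hx
    exact absurd hx (not_lt.2 h2.le)
  -- bound on B part
  have hBbound : μ {x | B x ≠ 0} ≤ ENNReal.ofReal (α ^ (-p)) := by
    have hsub2 : {x | B x ≠ 0} ⊆ ⋃ j : ℤ, {x | c < h j x} := by
      intro x hx
      rw [mem_setOf_eq, hB, ne_eq, ENNReal.tsum_eq_zero] at hx
      push_neg at hx
      obtain ⟨j, hj⟩ := hx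
      refine mem_iUnion.2 ⟨j, ?_⟩
      by_contra hcj
      exact hj (if_neg hcj)
    refine (measure_mono hsub2).trans ((measure_iUnion_le _).trans ?_)
    have hper : ∀ j : ℤ, μ {x | c < h j x} ≤ ENNReal.ofReal (α ^ (-p) * |lam j| ^ p) := by
      intro j
      by_cases hl0 : lam j = 0
      · have : {x | c < h j x} = ∅ := by
          ext x; simp [hh, hl0, hc0, pos_iff_ne_zero]
        simp [this]
      · have hlp : (0:ℝ) < |lam j| := abs_pos.2 hl0
        have hset : {x | c < h j x} = {x | α / |lam j| < |f j x|} := by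
          ext x
          simp only [mem_setOf_eq, hh, hc, abs_mul]
          rw [ENNReal.ofReal_lt_ofReal_iff_of_nonneg hα.le, div_lt_iff₀ hlp, mul_comm]
        rw [hset]
        refine (hf j _ (by positivity)).trans (le_of_eq ?_)
        congr 1
        rw [Real.div_rpow hα.le hlp.le, Real.rpow_neg hlp.le, div_eq_mul_inv, inv_inv]
    refine (ENNReal.tsum_le_tsum hper).trans ?_
    rw [← ENNReal.ofReal_tsum_of_nonneg (fun j => by positivity) (hsum.mul_left _),
      tsum_mul_left]
    refine ENNReal.ofReal_le_ofReal ?_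
    calc α ^ (-p) * ∑' j : ℤ, |lam j| ^ p ≤ α ^ (-p) * 1 :=
          mul_le_mul_of_nonneg_left hle (by positivity)
      _ = α ^ (-p) := mul_one _
  -- bound on G part
  have hKnn : (0:ℝ) ≤ α ^ (1 - p) / (1 - p) := by
    apply div_nonneg (by positivity); linarith
  have hGint : ∫⁻ x, G x ∂μ ≤ ENNReal.ofReal (α ^ (1 - p) / (1 - p)) := by
    rw [hG, lintegral_tsum (fun j => (hgm j).aemeasurable)]
    have hper : ∀ j : ℤ, ∫⁻ x, g j x ∂μ ≤
        ENNReal.ofReal (|lam j| ^ p * (α ^ (1 - p) / (1 - p))) := by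
      intro j
      by_cases hl0 : lam j = 0
      · have hz : ∀ x, g j x = 0 := by intro x; simp [hg, hh, hl0]
        simp only [hz, lintegral_zero]
        exact zero_le
      · have hlp : (0:ℝ) < |lam j| := abs_pos.2 hl0
        set t : ℝ := α / |lam j| with hT
        have ht : 0 < t := by positivity
        have hgj : ∀ x, g j x =
            ENNReal.ofReal |lam j| * ENNReal.ofReal (if |f j x| ≤ t then |f j x| else 0) := by
          intro x
          have hcond : (h j x ≤ c) ↔ (|f j x| ≤ t) := by
            show ENNReal.ofReal |lam j * f j x| ≤ ENNReal.ofReal α ↔ _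
            rw [abs_mul, ENNReal.ofReal_le_ofReal_iff hα.le, ← le_div_iff₀' hlp]
          by_cases hc2 : |f j x| ≤ t
          · rw [if_pos hc2, show g j x = h j x from if_pos (hcond.2 hc2),
              show h j x = ENNReal.ofReal |lam j * f j x| from rfl, abs_mul,
              ENNReal.ofReal_mul (abs_nonneg _)]
          · rw [if_neg hc2, ENNReal.ofReal_zero, mul_zero]
            exact if_neg (fun hcc => hc2 (hcond.1 hcc))
        calc ∫⁻ x, g j x ∂μ
            = ENNReal.ofReal |lam j| *
              ∫⁻ x, ENNReal.ofReal (if |f j x| ≤ t then |f j x| else 0) ∂μ := by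
              simp_rw [hgj]
              rw [lintegral_const_mul _
                (Measurable.ite (measurableSet_le (hfm j).abs measurable_const)
                  (hfm j).abs measurable_const).ennreal_ofReal]
          _ ≤ ENNReal.ofReal |lam j| * ENNReal.ofReal (t ^ (1 - p) / (1 - p)) :=
              mul_le_mul_right (trunc_lintegral μ p hp0 hp1 (f j) (hfm j) (hf j) t ht) _
          _ = ENNReal.ofReal (|lam j| * (t ^ (1 - p) / (1 - p))) :=
              (ENNReal.ofReal_mul (abs_nonneg _)).symm
          _ = ENNReal.ofReal (|lam j| ^ p * (α ^ (1 - p) / (1 - p))) := by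
              congr 1
              have hq : |lam j| ^ p = |lam j| / |lam j| ^ (1 - p) := by
                have h2 := Real.rpow_sub hlp (1 : ℝ) (1 - p)
                norm_num [Real.rpow_one] at h2
                exact h2
              have hY : |lam j| ^ ((1:ℝ) - p) ≠ 0 := (Real.rpow_pos_of_pos hlp _).ne'
              have h1p : (1:ℝ) - p ≠ 0 := by linarith
              rw [hT, Real.div_rpow hα.le hlp.le, hq]
              field_simp
    refine (ENNReal.tsum_le_tsum hper).trans ?_
    rw [← ENNReal.ofReal_tsum_of_nonneg (fun j => by positivity) (hsum.mul_right _),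
      tsum_mul_right]
    refine ENNReal.ofReal_le_ofReal ?_
    calc (∑' j : ℤ, |lam j| ^ p) * (α ^ (1 - p) / (1 - p))
        ≤ 1 * (α ^ (1 - p) / (1 - p)) := mul_le_mul_of_nonneg_right hle hKnn
      _ = _ := one_mul _
  have hGm : Measurable G := Measurable.ennreal_tsum hgm
  have hGbound : μ {x | c ≤ G x} ≤ ENNReal.ofReal (α ^ (-p) / (1 - p)) := by
    refine (meas_ge_le_lintegral_div hGm.aemeasurable hc0 ENNReal.ofReal_ne_top).trans ?_
    refine (ENNReal.div_le_div_right hGint c).trans (le_of_eq ?_)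
    rw [hc, ← ENNReal.ofReal_div_of_pos hα]
    congr 1
    have hpow : α ^ (1 - p) = α * α ^ (-p) := by
      rw [show (1:ℝ) - p = 1 + (-p) by ring, Real.rpow_add hα, Real.rpow_one]
    rw [div_right_comm]
    congr 1
    rw [hpow, mul_comm, mul_div_assoc, div_self hα.ne', mul_one]
  calc μ {x | ENNReal.ofReal α < ∑' j : ℤ, ENNReal.ofReal |lam j * f j x|}
      ≤ μ ({x | B x ≠ 0} ∪ {x | c ≤ G x}) := measure_mono hsubset
    _ ≤ μ {x | B x ≠ 0} + μ {x | c ≤ G x} := measure_union_le _ _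
    _ ≤ ENNReal.ofReal (α ^ (-p)) + ENNReal.ofReal (α ^ (-p) / (1 - p)) :=
        add_le_add hBbound hGbound
    _ = ENNReal.ofReal ((2 - p) / (1 - p) * α ^ (-p)) := by
        rw [← ENNReal.ofReal_add (by positivity) (div_nonneg (by positivity) (by linarith))]
        congr 1
        have : (1:ℝ) - p ≠ 0 := by linarith
        field_simp
        ring

/-- superposition principle for weighted weak type estimates. -/
theorem statement7 (n : ℕ) (p : ℝ) (hp0 : 0 < p) (hp1 : p < 1)
    (w : Rn n → ℝ) (hw0 : ∀ x, 0 ≤ w x) (hwl : LocallyIntegrable w volume)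
    (f : ℤ → Rn n → ℝ) (hfm : ∀ j, Measurable (f j))
    (hf : ∀ j : ℤ, ∀ a : ℝ, 0 < a → wm w {x | a < |f j x|} ≤ ENNReal.ofReal (a ^ (-p)))
    (lam : ℤ → ℝ) (hsum : Summable fun j => |lam j| ^ p)
    (hle : (∑' j : ℤ, |lam j| ^ p) ≤ 1) :
    (∀ᵐ x ∂(wm w), Summable fun j : ℤ => |lam j * f j x|) ∧
    ∀ a : ℝ, 0 < a →
      wm w {x | a < |∑' j : ℤ, lam j * f j x|} ≤
        ENNReal.ofReal ((2 - p) / (1 - p) * a ^ (-p)) := by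
  set μ := wm w with hμ
  have hiff : ∀ x, (Summable fun j : ℤ => |lam j * f j x|) ↔
      (∑' j : ℤ, ENNReal.ofReal |lam j * f j x|) ≠ ∞ := by
    intro x
    have e : ∀ j : ℤ, ENNReal.ofReal |lam j * f j x| =
        (‖lam j * f j x‖₊ : ℝ≥0∞) := by
      intro j; rw [← Real.norm_eq_abs, ofReal_norm_eq_enorm]; rfl
    rw [tsum_congr e, ENNReal.tsum_coe_ne_top_iff_summable, ← NNReal.summable_coe]
    simp only [coe_nnnorm, Real.norm_eq_abs]
  have main := weak_claim μ p hp0 hp1 f hfm hf lam hsum hle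
  constructor
  · rw [ae_iff]
    have hsubE : ∀ k : ℕ, {x | ¬ Summable fun j : ℤ => |lam j * f j x|} ⊆
        {x | ENNReal.ofReal ((k:ℝ)+1) < ∑' j : ℤ, ENNReal.ofReal |lam j * f j x|} := by
      intro k x hx
      have hxx : (∑' j : ℤ, ENNReal.ofReal |lam j * f j x|) = ∞ := by
        by_contra hne; exact hx ((hiff x).2 hne)
      simp only [mem_setOf_eq, hxx]; exact ENNReal.ofReal_lt_top
    have hub : ∀ k : ℕ, μ {x | ¬ Summable fun j : ℤ => |lam j * f j x|} ≤
        ENNReal.ofReal ((2-p)/(1-p) * ((k:ℝ)+1) ^ (-p)) :=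
      fun k => (measure_mono (hsubE k)).trans (main _ (by positivity))
    have hlim : Filter.Tendsto
        (fun k : ℕ => ENNReal.ofReal ((2-p)/(1-p) * ((k:ℝ)+1) ^ (-p)))
        Filter.atTop (nhds 0) := by
      rw [← ENNReal.ofReal_zero]
      apply ENNReal.tendsto_ofReal
      have h1 : Filter.Tendsto (fun k : ℕ => ((k:ℝ)+1) ^ (-p)) Filter.atTop (nhds 0) := by
        refine Filter.Tendsto.comp (tendsto_rpow_neg_atTop hp0) ?_
        exact Filter.tendsto_atTop_add_const_right _ 1 tendsto_natCast_atTop_atTop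
      simpa using h1.const_mul ((2-p)/(1-p))
    exact le_antisymm (ge_of_tendsto' hlim hub) zero_le
  · intro a ha
    refine (measure_mono ?_).trans (main a ha)
    intro x hx
    rw [mem_setOf_eq] at hx ⊢
    by_cases hS : (∑' j : ℤ, ENNReal.ofReal |lam j * f j x|) = ∞
    · rw [hS]; exact ENNReal.ofReal_lt_top
    · have habs : Summable fun j : ℤ => |lam j * f j x| := (hiff x).2 hS
      have hnorm : Summable fun j : ℤ => ‖lam j * f j x‖ := by
        simpa only [Real.norm_eq_abs] using habs
      have hb : |∑' j : ℤ, lam j * f j x| ≤ ∑' j : ℤ, |lam j * f j x| := by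
        have hb0 := norm_tsum_le_tsum_norm hnorm
        simpa only [Real.norm_eq_abs] using hb0
      have h2 : a < ∑' j : ℤ, |lam j * f j x| := lt_of_lt_of_le hx hb
      have h3 : ENNReal.ofReal a < ENNReal.ofReal (∑' j : ℤ, |lam j * f j x|) :=
        (ENNReal.ofReal_lt_ofReal_iff (lt_trans ha h2)).2 h2
      rwa [ENNReal.ofReal_tsum_of_nonneg (fun j => abs_nonneg _) habs] at h3

end
end

section
/- Let n ≥ 2, 0 < α < 1, p = n/(n+α), and w ∈ A_1. Then there exists a constant C > 0 such that for every cube Q = Q(x₀, r), the function G(x) = r^{n+α}/(|x−x₀|^{n+α}·w(Q)^{1/p}) satisfies λ^p·w({x ∉ 2√n·Q : G(x) > λ}) ≤ C for all λ > 0. -/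
open MeasureTheory Metric Set ENNReal
open scoped Classical

noncomputable section

lemma cube_eq {n : ℕ} (c : Rn n) (s : ℝ) :
    cube c s = (MeasurableEquiv.toLp 2 (Fin n → ℝ)).symm ⁻¹'
      (Set.univ.pi fun i => Icc (c i - s/2) (c i + s/2)) := by
  ext x
  simp [cube, MeasurableEquiv.toLp_symm_apply, Set.mem_pi, abs_sub_le_iff, Icc,
    sub_le_iff_le_add, and_comm]
  constructor
  · intro h i; constructor
    · linarith [(h i).1, (h i).2]
    · linarith [(h i).1, (h i).2]
  · intro h i; constructor
    · linarith [(h i).1, (h i).2]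
    · linarith [(h i).1, (h i).2]

lemma measurableSet_cube {n : ℕ} (c : Rn n) (s : ℝ) : MeasurableSet (cube c s) := by
  rw [cube_eq]
  exact (MeasurableEquiv.toLp 2 (Fin n → ℝ)).symm.measurable
    (MeasurableSet.univ_pi fun i => measurableSet_Icc)

lemma volume_cube {n : ℕ} (c : Rn n) (s : ℝ) :
    volume (cube c s) = ENNReal.ofReal s ^ n := by
  rw [cube_eq, (EuclideanSpace.volume_preserving_symm_measurableEquiv_toLp (Fin n)).measure_preimage
    (MeasurableSet.univ_pi fun i => measurableSet_Icc).nullMeasurableSet]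
  rw [volume_pi_pi]
  have h : ∀ i : Fin n, c i + s/2 - (c i - s/2) = s := fun i => by ring
  simp [Real.volume_Icc, h]

lemma isCompact_cube {n : ℕ} (c : Rn n) (s : ℝ) : IsCompact (cube c s) := by
  have : cube c s = (PiLp.continuousLinearEquiv 2 ℝ (fun _ : Fin n => ℝ)).toHomeomorph ⁻¹'
      (Set.univ.pi fun i => Icc (c i - s/2) (c i + s/2)) := by
    rw [cube_eq]; rfl
  rw [this, Homeomorph.isCompact_preimage]
  exact isCompact_univ_pi fun i => isCompact_Icc

lemma coord_le_norm {n : ℕ} (v : Rn n) (i : Fin n) : |v i| ≤ ‖v‖ := by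
  rw [EuclideanSpace.norm_eq, ← Real.sqrt_sq_eq_abs]
  apply Real.sqrt_le_sqrt
  simpa using Finset.single_le_sum (f := fun j => ‖v j‖^2) (fun j _ => sq_nonneg _)
    (Finset.mem_univ i)

/-- weak type estimate for `G(x) = r^{n+α}/(|x−x₀|^{n+α} w(Q)^{1/p})`
outside `2√n Q`, with `p = n/(n+α)` and `w ∈ A_1`. -/
theorem statement12 (n : ℕ) (hn : 2 ≤ n) (α : ℝ) (hα0 : 0 < α) (hα1 : α < 1)
    (w : Rn n → ℝ) (hw : IsA1 w) :
    ∃ C > 0, ∀ (x₀ : Rn n) (r : ℝ), 0 < r → ∀ lam : ℝ, 0 < lam →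
      ENNReal.ofReal (lam ^ ((n : ℝ) / (n + α))) *
        wm w {x | x ∉ cube x₀ (2 * Real.sqrt n * r) ∧
          lam < r ^ ((n : ℝ) + α) /
            (‖x - x₀‖ ^ ((n : ℝ) + α) * (∫ y in cube x₀ r, w y) ^ (((n : ℝ) + α) / n))} ≤
        ENNReal.ofReal C := by
  obtain ⟨hw0, hwloc, C₁, hC₁, hA1⟩ := hw
  refine ⟨C₁ * 2 ^ n, by positivity, ?_⟩
  intro x₀ r hr lam hlam
  have hn2 : (2:ℝ) ≤ (n:ℝ) := by exact_mod_cast hn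
  have hn0 : (0:ℝ) < (n:ℝ) := by linarith
  set np : ℝ := (n:ℝ) + α with hnp_def
  have hnp : 0 < np := by positivity
  set W : ℝ := ∫ y in cube x₀ r, w y with hW_def
  have hW0 : 0 ≤ W := setIntegral_nonneg (measurableSet_cube _ _) fun x _ => hw0 x
  set A : ℝ := W ^ (np / (n:ℝ)) with hA_def
  set S : Set (Rn n) := {x | x ∉ cube x₀ (2 * Real.sqrt n * r) ∧
      lam < r ^ np / (‖x - x₀‖ ^ np * A)} with hS_def
  by_cases hSne : S.Nonempty
  swap
  · rw [not_nonempty_iff_eq_empty] at hSne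
    rw [hSne]
    simp
  obtain ⟨z, hzS⟩ := hSne
  -- W > 0
  have hWpos : 0 < W := by
    rcases lt_or_eq_of_le hW0 with h | h
    · exact h
    · exfalso
      have hA0 : A = 0 := by
        rw [hA_def, ← h, Real.zero_rpow (by positivity : np / (n:ℝ) ≠ 0)]
      have := hzS.2
      rw [hA0, mul_zero, _root_.div_zero] at this
      linarith
  have hApos : 0 < A := Real.rpow_pos_of_pos hWpos _
  have hlamA : 0 < lam * A := mul_pos hlam hApos
  set B : ℝ := (lam * A) ^ (-(1:ℝ)/np) with hB_def
  have hBpos : 0 < B := Real.rpow_pos_of_pos hlamA _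
  set R : ℝ := r * B with hR_def
  have hRpos : 0 < R := mul_pos hr hBpos
  have hRnp : R ^ np = r ^ np * (lam * A)⁻¹ := by
    rw [hR_def, Real.mul_rpow hr.le hBpos.le, hB_def, ← Real.rpow_mul hlamA.le]
    rw [show -(1:ℝ)/np * np = -1 by field_simp]
    rw [Real.rpow_neg_one]
  -- membership facts
  have hmem : ∀ x ∈ S, ‖x - x₀‖ < R ∧ Real.sqrt n * r < ‖x - x₀‖ := by
    intro x hx
    obtain ⟨hx1, hx2⟩ := hx
    have hd0 : 0 ≤ ‖x - x₀‖ ^ np * A :=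
      mul_nonneg (Real.rpow_nonneg (norm_nonneg _) _) hApos.le
    have hd : 0 < ‖x - x₀‖ ^ np * A := by
      rcases lt_or_eq_of_le hd0 with h | h
      · exact h
      · exfalso; rw [← h, _root_.div_zero] at hx2; linarith
    have h3 : lam * (‖x - x₀‖ ^ np * A) < r ^ np := (lt_div_iff₀ hd).1 hx2
    have h4 : ‖x - x₀‖ ^ np < R ^ np := by
      rw [hRnp, ← div_eq_mul_inv, lt_div_iff₀ hlamA]
      ring_nf
      ring_nf at h3
      linarith
    constructor
    · by_contra hcon
      push_neg at hcon
      have := Real.rpow_le_rpow hRpos.le hcon hnp.le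
      linarith
    · simp only [cube, Set.mem_setOf_eq, not_forall, not_le] at hx1
      obtain ⟨i, hi⟩ := hx1
      have h5 : Real.sqrt n * r < |x i - x₀ i| := by
        rw [show 2 * Real.sqrt n * r / 2 = Real.sqrt n * r by ring] at hi
        exact hi
      have h6 : |x i - x₀ i| ≤ ‖x - x₀‖ := by
        have : (x - x₀) i = x i - x₀ i := rfl
        rw [← this]
        exact coord_le_norm _ i
      linarith
  have hnp' : np ≠ 0 := hnp.ne'
  have hn' : (n:ℝ) ≠ 0 := hn0.ne'
  have hsnr : 1 ≤ Real.sqrt n := by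
    rw [show (1:ℝ) = Real.sqrt 1 by simp]
    exact Real.sqrt_le_sqrt (by linarith)
  have hrR : r < R := by
    obtain ⟨h1, h2⟩ := hmem z hzS
    nlinarith
  have hsub1 : S ⊆ cube x₀ (2*R) := by
    intro x hx i
    have h1 := (hmem x hx).1
    have h2 : |(x - x₀) i| ≤ ‖x - x₀‖ := coord_le_norm _ i
    have h3 : (x - x₀) i = x i - x₀ i := rfl
    rw [h3] at h2
    have : |x i - x₀ i| ≤ 2*R/2 := by linarith
    exact this
  have hsub2 : cube x₀ r ⊆ cube x₀ (2*R) := by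
    intro x hx i
    have := hx i
    have h4 : (r:ℝ)/2 ≤ 2*R/2 := by linarith
    calc |x i - x₀ i| ≤ r/2 := this
      _ ≤ 2*R/2 := h4
  set I₂ : ℝ := ∫ y in cube x₀ (2*R), w y with hI2_def
  have hwint_r : IntegrableOn w (cube x₀ r) volume :=
    hwloc.integrableOn_isCompact (isCompact_cube _ _)
  have hwint_R : IntegrableOn w (cube x₀ (2*R)) volume :=
    hwloc.integrableOn_isCompact (isCompact_cube _ _)
  set V : ℝ := (volume (cube x₀ (2*R))).toReal with hV_def
  have hVval : V = (2*R)^n := by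
    rw [hV_def, volume_cube, ← ENNReal.ofReal_pow (by positivity)]
    exact ENNReal.toReal_ofReal (by positivity)
  have hVpos : 0 < V := by rw [hVval]; positivity
  have hae := hA1 x₀ (2*R) (by positivity)
  have hae' : ∀ᵐ y ∂(volume.restrict (cube x₀ r)), V⁻¹ * I₂ ≤ C₁ * w y :=
    ae_restrict_of_ae_restrict_of_subset hsub2 hae
  have hvol_r_fin : volume (cube x₀ r) < ⊤ := by
    rw [volume_cube]; exact ENNReal.pow_lt_top ENNReal.ofReal_lt_top
  have hrn : (0:ℝ) < r^n := by positivity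
  have key : V⁻¹ * I₂ * r^n ≤ C₁ * W := by
    have h1 : (∫ _y in cube x₀ r, (V⁻¹ * I₂)) = r^n * (V⁻¹ * I₂) := by
      rw [setIntegral_const, measureReal_def, volume_cube, ← ENNReal.ofReal_pow hr.le,
        ENNReal.toReal_ofReal (by positivity), smul_eq_mul]
    have h2 : (∫ _y in cube x₀ r, (V⁻¹ * I₂)) ≤ ∫ y in cube x₀ r, C₁ * w y :=
      integral_mono_ae (integrableOn_const hvol_r_fin.ne) (hwint_r.const_mul C₁) hae'
    have h3 : (∫ y in cube x₀ r, C₁ * w y) = C₁ * W := by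
      rw [hW_def, ← integral_const_mul]
    rw [h1, h3] at h2
    linarith
  have hI2le : I₂ ≤ C₁ * W * V / r^n := by
    rw [le_div_iff₀ hrn]
    calc I₂ * r^n = V * (V⁻¹ * I₂ * r^n) := by field_simp
      _ ≤ V * (C₁ * W) := mul_le_mul_of_nonneg_left key hVpos.le
      _ = C₁ * W * V := by ring
  have hBn : B ^ n = lam ^ (-((n:ℝ)/np)) * A ^ (-((n:ℝ)/np)) := by
    rw [hB_def, ← Real.rpow_natCast ((lam*A) ^ (-(1:ℝ)/np)) n, ← Real.rpow_mul hlamA.le,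
      show -(1:ℝ)/np * (n:ℝ) = -((n:ℝ)/np) by ring,
      Real.mul_rpow hlam.le hApos.le]
  have hAe : A ^ (-((n:ℝ)/np)) = W⁻¹ := by
    rw [hA_def, ← Real.rpow_mul hW0, show np/(n:ℝ) * -((n:ℝ)/np) = -1 by field_simp,
      Real.rpow_neg_one]
  have hl : lam ^ ((n:ℝ)/np) * lam ^ (-((n:ℝ)/np)) = 1 := by
    rw [← Real.rpow_add hlam]; simp
  have hWW : W * W⁻¹ = 1 := mul_inv_cancel₀ hWpos.ne'
  have hrr : r^n * (r^n)⁻¹ = 1 := mul_inv_cancel₀ hrn.ne'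
  have harith : lam ^ ((n:ℝ)/np) * (C₁ * W * V / r^n) = C₁ * 2^n := by
    have h5 : lam ^ ((n:ℝ)/np) * (C₁ * W * V / r^n)
        = C₁ * 2^n * ((lam ^ ((n:ℝ)/np) * lam ^ (-((n:ℝ)/np))) * (W * W⁻¹) * (r^n * (r^n)⁻¹)) := by
      rw [hVval, hR_def, mul_pow, mul_pow, hBn, hAe]
      ring
    rw [h5, hl, hWW, hrr]; ring
  have final : lam ^ ((n:ℝ)/np) * I₂ ≤ C₁ * 2^n := by
    calc lam ^ ((n:ℝ)/np) * I₂ ≤ lam ^ ((n:ℝ)/np) * (C₁ * W * V / r^n) :=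
          mul_le_mul_of_nonneg_left hI2le (Real.rpow_nonneg hlam.le _)
      _ = C₁ * 2^n := harith
  have hwmS : wm w S ≤ ENNReal.ofReal I₂ := by
    calc wm w S ≤ wm w (cube x₀ (2*R)) := measure_mono hsub1
      _ = ∫⁻ y in cube x₀ (2*R), ENNReal.ofReal (w y) :=
          withDensity_apply _ (measurableSet_cube _ _)
      _ = ENNReal.ofReal I₂ := (ofReal_integral_eq_lintegral_ofReal hwint_R
            (Filter.Eventually.of_forall fun x => hw0 x)).symm
  calc ENNReal.ofReal (lam ^ ((n:ℝ)/np)) * wm w S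
      ≤ ENNReal.ofReal (lam ^ ((n:ℝ)/np)) * ENNReal.ofReal I₂ := mul_le_mul_right hwmS _
    _ = ENNReal.ofReal (lam ^ ((n:ℝ)/np) * I₂) :=
        (ENNReal.ofReal_mul (Real.rpow_nonneg hlam.le _)).symm
    _ ≤ ENNReal.ofReal (C₁ * 2^n) := ENNReal.ofReal_le_ofReal final

end
end

section
/- Let 0 < p ≤ 1, let w be a weight on ℝⁿ, and let c, C₀, A > 0. Suppose that for each k ∈ ℤ we are given cubes {Q^k_i}_i and measurable functions {b^k_i}_i such that each b^k_i is supported in Q^k_i, ‖b^k_i‖_{L^∞} ≤ C₀·2^k, Σ_i w(Q^k_i) ≤ c·2^{−kp}, and Σ_i χ_{Q^k_i}(x) ≤ A for all x. Then there exists a constant C > 0, depending only on p, A, C₀, such that for every k₀ ∈ ℤ, ‖Σ_{k=−∞}^{k₀} Σ_i b^k_i‖_{L^2_w} ≤ C·2^{k₀(1−p/2)}·c^{1/2}. -/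
open MeasureTheory Metric Set ENNReal
open scoped Classical

noncomputable section

lemma aux_ofReal_abs_tsum {ι : Type*} (f : ι → ℝ) :
    ENNReal.ofReal |∑' i, f i| ≤ ∑' i, ENNReal.ofReal |f i| := by
  by_cases hf : Summable f
  · have habs : Summable (fun i => |f i|) := hf.abs
    calc ENNReal.ofReal |∑' i, f i| ≤ ENNReal.ofReal (∑' i, |f i|) := by
          apply ENNReal.ofReal_le_ofReal
          simpa [Real.norm_eq_abs] using
            norm_tsum_le_tsum_norm (f := f) (by simpa [Real.norm_eq_abs] using habs)
      _ = ∑' i, ENNReal.ofReal |f i| :=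
          ENNReal.ofReal_tsum_of_nonneg (fun i => abs_nonneg _) habs
  · simp [tsum_eq_zero_of_not_summable hf]

lemma aux_CS (f g : ℤ → ℝ≥0∞) :
    (∑' k, f k * g k) ^ 2 ≤ (∑' k, (f k)^2) * (∑' k, (g k)^2) := by
  have hconj : Real.HolderConjugate 2 2 := Real.HolderConjugate.two_two
  have h := ENNReal.lintegral_mul_le_Lp_mul_Lq (Measure.count : Measure ℤ) hconj
    (f := f) (g := g) (measurable_of_countable f).aemeasurable
    (measurable_of_countable g).aemeasurable
  rw [lintegral_count] at h
  simp only [Pi.mul_apply] at h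
  have h2 : (∑' k, f k * g k) ^ 2 ≤
      ((∫⁻ a, f a ^ (2:ℝ) ∂Measure.count) ^ (1/(2:ℝ)) *
       (∫⁻ a, g a ^ (2:ℝ) ∂Measure.count) ^ (1/(2:ℝ))) ^ 2 :=
    pow_le_pow_left' h 2
  calc (∑' k, f k * g k) ^ 2 ≤ _ := h2
    _ = (∫⁻ a, f a ^ (2:ℝ) ∂Measure.count) * (∫⁻ a, g a ^ (2:ℝ) ∂Measure.count) := by
        rw [mul_pow, ← ENNReal.rpow_natCast (_ ^ (1/(2:ℝ))) 2,
          ← ENNReal.rpow_natCast (_ ^ (1/(2:ℝ))) 2, ← ENNReal.rpow_mul, ← ENNReal.rpow_mul]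
        norm_num
    _ = (∑' k, (f k)^2) * (∑' k, (g k)^2) := by
        rw [lintegral_count, lintegral_count]
        congr 1 <;> refine tsum_congr fun k => ?_ <;>
          rw [← ENNReal.rpow_natCast _ 2] <;> norm_num

lemma aux_geom (k₀ : ℤ) (ε : ℝ) :
    (∑' k : ℤ, if k ≤ k₀ then (2:ℝ≥0∞) ^ ((k:ℝ) * ε) else 0) =
      (2:ℝ≥0∞) ^ ((k₀:ℝ) * ε) * (1 - (2:ℝ≥0∞) ^ (-ε))⁻¹ := by
  have hinj : Function.Injective (fun j : ℕ => k₀ - (j:ℤ)) := by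
    intro a b h; simp only at h; omega
  have hsupp : Function.support
      (fun k : ℤ => if k ≤ k₀ then (2:ℝ≥0∞) ^ ((k:ℝ) * ε) else 0) ⊆
      Set.range (fun j : ℕ => k₀ - (j:ℤ)) := by
    intro k hk
    simp only [Function.mem_support, ne_eq, ite_eq_right_iff, not_forall] at hk
    obtain ⟨hle, -⟩ := hk
    exact ⟨(k₀ - k).toNat, by show k₀ - ((k₀ - k).toNat : ℤ) = k; omega⟩
  rw [← hinj.tsum_eq hsupp]
  have h2 : (2:ℝ≥0∞) ≠ 0 := two_ne_zero
  have h2' : (2:ℝ≥0∞) ≠ ⊤ := ENNReal.ofNat_ne_top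
  have : ∀ j : ℕ, (if k₀ - (j:ℤ) ≤ k₀ then (2:ℝ≥0∞) ^ (((k₀ - (j:ℤ) : ℤ):ℝ) * ε) else 0)
      = (2:ℝ≥0∞) ^ ((k₀:ℝ) * ε) * ((2:ℝ≥0∞) ^ (-ε)) ^ j := by
    intro j
    rw [if_pos (by omega)]
    rw [← ENNReal.rpow_natCast ((2:ℝ≥0∞) ^ (-ε)) j, ← ENNReal.rpow_mul,
      ← ENNReal.rpow_add _ _ h2 h2']
    congr 1
    push_cast
    ring
  rw [tsum_congr this, ENNReal.tsum_mul_left, ENNReal.tsum_geometric]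

lemma cube_measurable {n : ℕ} (c : Rn n) (r : ℝ) : MeasurableSet (cube c r) := by
  have : cube c r = ⋂ i, {x : Rn n | |x i - c i| ≤ r / 2} := by
    ext x; simp [cube]
  rw [this]
  refine MeasurableSet.iInter fun i => ?_
  have hcont : Continuous (fun x : Rn n => |x i - c i|) :=
    ((continuous_apply i).comp (PiLp.continuous_ofLp 2 _) |>.sub continuous_const).abs
  exact measurableSet_le hcont.measurable measurable_const

lemma h2e (y : ℝ) : (2:ℝ≥0∞) ^ y = ENNReal.ofReal ((2:ℝ) ^ y) := by
  rw [show ((2:ℝ≥0∞)) = ENNReal.ofReal (2:ℝ) by simp, ENNReal.ofReal_rpow_of_pos two_pos]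

/-- the `L^2_w` estimate `‖Σ_{k ≤ k₀} Σ_i b^k_i‖_{L^2_w} ≤ C 2^{k₀(1−p/2)} c^{1/2}`. -/
theorem statement14 (n : ℕ) (p C₀ A : ℝ) (hp0 : 0 < p) (hp1 : p ≤ 1)
    (hC₀ : 0 < C₀) (hA : 0 < A) :
    ∃ C > 0, ∀ w : Rn n → ℝ, (∀ x, 0 ≤ w x) → LocallyIntegrable w volume →
      ∀ cc : ℝ, 0 < cc →
      ∀ (ctr : ℤ → ℕ → Rn n) (rad : ℤ → ℕ → ℝ) (b : ℤ → ℕ → Rn n → ℝ),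
        (∀ k i, 0 < rad k i) → (∀ k i, Measurable (b k i)) →
        (∀ k i x, x ∉ cube (ctr k i) (rad k i) → b k i x = 0) →
        (∀ k i x, |b k i x| ≤ C₀ * (2 : ℝ) ^ k) →
        (∀ k : ℤ, (∑' i : ℕ, wm w (cube (ctr k i) (rad k i))) ≤
          ENNReal.ofReal (cc * (2 : ℝ) ^ (-(k : ℝ) * p))) →
        (∀ (k : ℤ) (x : Rn n),
          (∑' i : ℕ, (cube (ctr k i) (rad k i)).indicator (fun _ => (1 : ℝ≥0∞)) x) ≤
            ENNReal.ofReal A) →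
        ∀ k₀ : ℤ,
          (∫⁻ x, ENNReal.ofReal
              ((∑' k : ℤ, ∑' i : ℕ, if k ≤ k₀ then b k i x else 0) ^ 2 * w x)) ^ ((1:ℝ)/2) ≤
            ENNReal.ofReal (C * (2 : ℝ) ^ ((k₀ : ℝ) * (1 - p / 2)) * Real.sqrt cc) := by
  set ε : ℝ := 1 - p / 2 with hεdef
  have hε : 0 < ε := by simp only [hεdef]; linarith
  set d : ℝ := (2:ℝ) ^ (-ε) with hddef
  have hd0 : 0 < d := Real.rpow_pos_of_pos two_pos _
  have hd1 : d < 1 := Real.rpow_lt_one_of_one_lt_of_neg one_lt_two (by linarith)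
  refine ⟨C₀ * Real.sqrt A / (1 - d), div_pos (by positivity) (by linarith), ?_⟩
  intro w hw hwli cc hcc ctr rad b hrad hbmeas hbsupp hbbd hsum hover k₀
  set C : ℝ := C₀ * Real.sqrt A / (1 - d) with hCdef
  set W : Rn n → ℝ≥0∞ := fun x => ENNReal.ofReal (w x) with hWdef
  have hWae : AEMeasurable W volume := hwli.aestronglyMeasurable.aemeasurable.ennreal_ofReal
  set Q : ℤ → ℕ → Set (Rn n) := fun k i => cube (ctr k i) (rad k i) with hQdef
  have hQm : ∀ k i, MeasurableSet (Q k i) := fun k i => cube_measurable _ _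
  set G : ℤ → Rn n → ℝ≥0∞ := fun k x => ∑' i, ENNReal.ofReal |b k i x| with hGdef
  have hGmeas : ∀ k, Measurable (G k) := fun k =>
    Measurable.ennreal_tsum fun i => ((hbmeas k i).abs).ennreal_ofReal
  set ck : ℤ → ℝ := fun k => C₀ * (2:ℝ) ^ k with hckdef
  have hck0 : ∀ k, 0 < ck k := fun k => by positivity
  -- pointwise bound on single pieces
  have hbind : ∀ (k : ℤ) (i : ℕ) (x : Rn n), ENNReal.ofReal |b k i x| ≤
      ENNReal.ofReal (ck k) * (Q k i).indicator (fun _ => (1:ℝ≥0∞)) x := by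
    intro k i x
    by_cases hx : x ∈ Q k i
    · simp only [Set.indicator_of_mem hx, mul_one]
      exact ENNReal.ofReal_le_ofReal (hbbd k i x)
    · simp [hbsupp k i x hx, Set.indicator_of_notMem hx]
  -- bound on G
  have hGbd : ∀ k x, G k x ≤ ENNReal.ofReal (ck k) * ENNReal.ofReal A := by
    intro k x
    calc G k x ≤ ∑' i, ENNReal.ofReal (ck k) * (Q k i).indicator (fun _ => (1:ℝ≥0∞)) x :=
          Summable.tsum_le_tsum (fun i => hbind k i x) ENNReal.summable ENNReal.summable
      _ = ENNReal.ofReal (ck k) * ∑' i, (Q k i).indicator (fun _ => (1:ℝ≥0∞)) x :=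
          ENNReal.tsum_mul_left
      _ ≤ _ := mul_le_mul_right (hover k x) _
  -- the L¹ bound on G against W
  have hGL1 : ∀ k, ∫⁻ x, G k x * W x ≤
      ENNReal.ofReal (ck k) * ENNReal.ofReal (cc * (2:ℝ) ^ (-(k:ℝ) * p)) := by
    intro k
    have hstep : ∫⁻ x, G k x * W x = ∑' i, ∫⁻ x, ENNReal.ofReal |b k i x| * W x := by
      rw [← lintegral_tsum (f := fun i x => ENNReal.ofReal |b k i x| * W x) (fun i => (((hbmeas k i).abs).ennreal_ofReal).aemeasurable.mul hWae)]
      refine lintegral_congr fun x => ?_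
      simp only [hGdef]
      exact ENNReal.tsum_mul_right.symm
    rw [hstep]
    have hper : ∀ i, ∫⁻ x, ENNReal.ofReal |b k i x| * W x ≤
        ENNReal.ofReal (ck k) * wm w (Q k i) := by
      intro i
      have hindW : ∫⁻ x, (Q k i).indicator (fun _ => (1:ℝ≥0∞)) x * W x = wm w (Q k i) := by
        have hpt : ∀ x, (Q k i).indicator (fun _ => (1:ℝ≥0∞)) x * W x
            = (Q k i).indicator W x := by
          intro x; by_cases hx : x ∈ Q k i <;> simp [hx]
        rw [lintegral_congr hpt, lintegral_indicator (hQm k i), wm,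
          withDensity_apply _ (hQm k i)]
      calc ∫⁻ x, ENNReal.ofReal |b k i x| * W x
          ≤ ∫⁻ x, ENNReal.ofReal (ck k) * ((Q k i).indicator (fun _ => (1:ℝ≥0∞)) x * W x) := by
            refine lintegral_mono fun x => ?_
            rw [← mul_assoc]
            exact mul_le_mul_left (hbind k i x) _
        _ = ENNReal.ofReal (ck k) * ∫⁻ x, (Q k i).indicator (fun _ => (1:ℝ≥0∞)) x * W x :=
            lintegral_const_mul' _ _ ENNReal.ofReal_ne_top
        _ = ENNReal.ofReal (ck k) * wm w (Q k i) := by rw [hindW]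
    calc ∑' i, ∫⁻ x, ENNReal.ofReal |b k i x| * W x
        ≤ ∑' i, ENNReal.ofReal (ck k) * wm w (Q k i) :=
          Summable.tsum_le_tsum hper ENNReal.summable ENNReal.summable
      _ = ENNReal.ofReal (ck k) * ∑' i, wm w (Q k i) := ENNReal.tsum_mul_left
      _ ≤ _ := mul_le_mul_right (hsum k) _
  -- the L² bound on G against W
  have hGL2 : ∀ k, ∫⁻ x, (G k x)^2 * W x ≤
      ENNReal.ofReal (ck k) * ENNReal.ofReal A *
        (ENNReal.ofReal (ck k) * ENNReal.ofReal (cc * (2:ℝ) ^ (-(k:ℝ) * p))) := by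
    intro k
    calc ∫⁻ x, (G k x)^2 * W x
        ≤ ∫⁻ x, (ENNReal.ofReal (ck k) * ENNReal.ofReal A) * (G k x * W x) := by
          refine lintegral_mono fun x => ?_
          rw [← mul_assoc]
          refine mul_le_mul_left ?_ _
          rw [pow_two]
          exact mul_le_mul_left (hGbd k x) _
      _ = (ENNReal.ofReal (ck k) * ENNReal.ofReal A) * ∫⁻ x, G k x * W x :=
          lintegral_const_mul' _ _ (by
            exact ENNReal.mul_ne_top ENNReal.ofReal_ne_top ENNReal.ofReal_ne_top)
      _ ≤ _ := by
          rw [mul_comm (ENNReal.ofReal (ck k)) (ENNReal.ofReal A)] at *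
          exact mul_le_mul_right (hGL1 k) _

  -- the summed pieces
  set H : ℤ → Rn n → ℝ≥0∞ := fun k x => if k ≤ k₀ then G k x else 0 with hHdef
  set T : Rn n → ℝ≥0∞ := fun x => ∑' k, H k x with hTdef
  have key1 : ∀ x, ENNReal.ofReal ((∑' k:ℤ, ∑' i:ℕ, if k ≤ k₀ then b k i x else 0)^2 * w x)
      ≤ (T x)^2 * W x := by
    intro x
    set F : ℝ := ∑' k:ℤ, ∑' i:ℕ, if k ≤ k₀ then b k i x else 0 with hF
    have h1 : ENNReal.ofReal (F^2 * w x) = ENNReal.ofReal (F^2) * W x :=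
      ENNReal.ofReal_mul (sq_nonneg F)
    have h2 : ENNReal.ofReal (F^2) = (ENNReal.ofReal |F|)^2 := by
      rw [← ENNReal.ofReal_pow (abs_nonneg F), sq_abs]
    have h3 : ENNReal.ofReal |F| ≤ T x := by
      calc ENNReal.ofReal |F|
          ≤ ∑' k:ℤ, ENNReal.ofReal |∑' i:ℕ, if k ≤ k₀ then b k i x else 0| :=
            aux_ofReal_abs_tsum _
        _ ≤ ∑' k, H k x := by
            refine Summable.tsum_le_tsum (fun k => ?_) ENNReal.summable ENNReal.summable
            by_cases hk : k ≤ k₀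
            · have hGk : G k x = ∑' i:ℕ, ENNReal.ofReal |b k i x| := by rw [hGdef]
              simp only [hHdef, if_pos hk]
              rw [hGk]
              exact aux_ofReal_abs_tsum _
            · simp [hHdef, hk]
    rw [h1, h2]
    exact mul_le_mul_left (pow_le_pow_left' h3 2) _
  -- Cauchy-Schwarz splitting
  set u : ℤ → ℝ≥0∞ := fun k => if k ≤ k₀ then (2:ℝ≥0∞) ^ ((k:ℝ) * ε / 2) else 0 with hudef
  set v : ℤ → Rn n → ℝ≥0∞ :=
    fun k x => if k ≤ k₀ then (2:ℝ≥0∞) ^ (-((k:ℝ) * ε) / 2) * G k x else 0 with hvdef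
  have hHuv : ∀ k x, H k x = u k * v k x := by
    intro k x
    by_cases hk : k ≤ k₀
    · simp only [hHdef, hudef, hvdef, if_pos hk]
      rw [← mul_assoc, ← ENNReal.rpow_add _ _ two_ne_zero ENNReal.ofNat_ne_top,
        show (k:ℝ)*ε/2 + -((k:ℝ)*ε)/2 = 0 by ring, ENNReal.rpow_zero, one_mul]
    · simp [hHdef, hudef, hvdef, hk]
  have key2 : ∀ x, (T x)^2 ≤ (∑' k, (u k)^2) * (∑' k, (v k x)^2) := by
    intro x
    have hT : T x = ∑' k, u k * v k x := tsum_congr fun k => hHuv k x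
    rw [hT]
    exact aux_CS u (fun k => v k x)
  -- value of the first sum
  have hu2 : ∀ k, (u k)^2 = if k ≤ k₀ then (2:ℝ≥0∞) ^ ((k:ℝ)*ε) else 0 := by
    intro k
    by_cases hk : k ≤ k₀
    · simp only [hudef, if_pos hk]
      rw [← ENNReal.rpow_natCast _ 2, ← ENNReal.rpow_mul]
      congr 1
      push_cast
      ring
    · simp [hudef, hk]
  set s₁ : ℝ := (2:ℝ)^((k₀:ℝ)*ε) * (1-d)⁻¹ with hs₁def
  have hs₁0 : 0 ≤ s₁ := by
    have := Real.rpow_nonneg (le_of_lt two_pos) ((k₀:ℝ)*ε)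
    have h1d : (0:ℝ) < 1 - d := by linarith
    positivity
  have hS₁ : (∑' k, (u k)^2) = ENNReal.ofReal s₁ := by
    rw [tsum_congr hu2, aux_geom, h2e, h2e, hs₁def, ENNReal.ofReal_mul
      (Real.rpow_nonneg (le_of_lt two_pos) _)]
    congr 1
    rw [hddef, ENNReal.ofReal_inv_of_pos
        (by rw [← hddef]; linarith : (0:ℝ) < 1 - (2:ℝ)^(-ε)),
      ENNReal.ofReal_sub _ (Real.rpow_nonneg (le_of_lt two_pos) _), ENNReal.ofReal_one]
  -- value of the second sum, termwise
  have hv2 : ∀ k x, (v k x)^2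
      = (if k ≤ k₀ then (2:ℝ≥0∞) ^ (-((k:ℝ)*ε)) * (G k x)^2 else 0) := by
    intro k x
    by_cases hk : k ≤ k₀
    · simp only [hvdef, if_pos hk, mul_pow]
      congr 1
      rw [← ENNReal.rpow_natCast _ 2, ← ENNReal.rpow_mul]
      congr 1
      push_cast
      ring
    · simp [hvdef, hk]
  have hvmeas : ∀ k, AEMeasurable (fun x => (v k x)^2 * W x) volume := by
    intro k
    have hvk : Measurable (v k) := by
      simp only [hvdef]
      split_ifs with hk
      · exact measurable_const.mul (hGmeas k)
      · exact measurable_const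
    exact ((hvk.pow_const 2).aemeasurable).mul hWae
  have hVW : ∫⁻ x, (∑' k, (v k x)^2) * W x = ∑' k, ∫⁻ x, (v k x)^2 * W x := by
    rw [← lintegral_tsum hvmeas]
    exact lintegral_congr fun x => ENNReal.tsum_mul_right.symm
  -- per-k integral bound
  have hIk : ∀ k, ∫⁻ x, (v k x)^2 * W x ≤
      (if k ≤ k₀ then ENNReal.ofReal (A * C₀^2 * cc) * (2:ℝ≥0∞)^((k:ℝ)*ε) else 0) := by
    intro k
    by_cases hk : k ≤ k₀
    · rw [if_pos hk]
      have h1 : ∫⁻ x, (v k x)^2 * W x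
          = (2:ℝ≥0∞)^(-((k:ℝ)*ε)) * ∫⁻ x, (G k x)^2 * W x := by
        rw [← lintegral_const_mul' _ _ (by rw [h2e]; exact ENNReal.ofReal_ne_top)]
        refine lintegral_congr fun x => ?_
        rw [hv2 k x, if_pos hk, mul_assoc]
      rw [h1]
      calc (2:ℝ≥0∞)^(-((k:ℝ)*ε)) * ∫⁻ x, (G k x)^2 * W x
          ≤ (2:ℝ≥0∞)^(-((k:ℝ)*ε)) * (ENNReal.ofReal (ck k) * ENNReal.ofReal A *
              (ENNReal.ofReal (ck k) * ENNReal.ofReal (cc * (2:ℝ)^(-(k:ℝ)*p)))) :=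
            mul_le_mul_right (hGL2 k) _
        _ = ENNReal.ofReal (A * C₀^2 * cc) * (2:ℝ≥0∞)^((k:ℝ)*ε) := by
            rw [h2e (-((k:ℝ)*ε)), h2e ((k:ℝ)*ε)]
            have hck := (hck0 k).le
            have h2k : (0:ℝ) ≤ (2:ℝ)^(-(k:ℝ)*p) := Real.rpow_nonneg (le_of_lt two_pos) _
            have h2Ke : (0:ℝ) ≤ (2:ℝ)^(-((k:ℝ)*ε)) := Real.rpow_nonneg (le_of_lt two_pos) _
            rw [← ENNReal.ofReal_mul (by positivity : (0:ℝ) ≤ A * C₀^2 * cc)]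
            rw [show ENNReal.ofReal ((2:ℝ)^(-((k:ℝ)*ε))) *
                (ENNReal.ofReal (ck k) * ENNReal.ofReal A *
                 (ENNReal.ofReal (ck k) * ENNReal.ofReal (cc * (2:ℝ)^(-(k:ℝ)*p)))) =
                ENNReal.ofReal ((2:ℝ)^(-((k:ℝ)*ε)) * (ck k * A * (ck k * (cc * (2:ℝ)^(-(k:ℝ)*p))))) by
              rw [ENNReal.ofReal_mul h2Ke, ENNReal.ofReal_mul (mul_nonneg hck hA.le),
                ENNReal.ofReal_mul hck, ENNReal.ofReal_mul hck]]
            congr 1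
            have hz : (2:ℝ)^(k:ℤ) = (2:ℝ)^((k:ℝ)) := (Real.rpow_intCast 2 k).symm
            simp only [hckdef, hz]
            have hcollect : (2:ℝ)^(-((k:ℝ)*ε)) * ((2:ℝ)^((k:ℝ)) * ((2:ℝ)^((k:ℝ)) *
                (2:ℝ)^(-(k:ℝ)*p))) = (2:ℝ)^((k:ℝ)*ε) := by
              rw [← Real.rpow_add two_pos, ← Real.rpow_add two_pos, ← Real.rpow_add two_pos]
              congr 1
              simp only [hεdef]
              ring
            calc (2:ℝ)^(-((k:ℝ)*ε)) * (C₀ * (2:ℝ)^((k:ℝ)) * A * (C₀ * (2:ℝ)^((k:ℝ)) *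
                  (cc * (2:ℝ)^(-(k:ℝ)*p))))
                = (A * C₀^2 * cc) * ((2:ℝ)^(-((k:ℝ)*ε)) * ((2:ℝ)^((k:ℝ)) * ((2:ℝ)^((k:ℝ)) *
                  (2:ℝ)^(-(k:ℝ)*p)))) := by ring
              _ = A * C₀^2 * cc * (2:ℝ)^((k:ℝ)*ε) := by rw [hcollect]
    · rw [if_neg hk]
      have : ∀ x, (v k x)^2 * W x = 0 := by
        intro x
        rw [hv2 k x, if_neg hk, zero_mul]
      rw [lintegral_congr this, lintegral_zero]
  -- sum the per-k bounds
  have hVsum : (∑' k, ∫⁻ x, (v k x)^2 * W x)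
      ≤ ENNReal.ofReal (A * C₀^2 * cc) * ENNReal.ofReal s₁ := by
    calc (∑' k, ∫⁻ x, (v k x)^2 * W x)
        ≤ ∑' k, (if k ≤ k₀ then ENNReal.ofReal (A * C₀^2 * cc) * (2:ℝ≥0∞)^((k:ℝ)*ε) else 0) :=
          Summable.tsum_le_tsum hIk ENNReal.summable ENNReal.summable
      _ = ENNReal.ofReal (A * C₀^2 * cc) *
          (∑' k, if k ≤ k₀ then (2:ℝ≥0∞)^((k:ℝ)*ε) else 0) := by
          rw [← ENNReal.tsum_mul_left]
          refine tsum_congr fun k => ?_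
          split_ifs <;> simp
      _ = ENNReal.ofReal (A * C₀^2 * cc) * ENNReal.ofReal s₁ := by
          rw [← hS₁, tsum_congr hu2]
  -- assemble
  have hXle : (∫⁻ x, ENNReal.ofReal
      ((∑' k : ℤ, ∑' i : ℕ, if k ≤ k₀ then b k i x else 0) ^ 2 * w x))
      ≤ ENNReal.ofReal s₁ * (ENNReal.ofReal (A * C₀^2 * cc) * ENNReal.ofReal s₁) := by
    calc (∫⁻ x, ENNReal.ofReal
        ((∑' k : ℤ, ∑' i : ℕ, if k ≤ k₀ then b k i x else 0) ^ 2 * w x))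
        ≤ ∫⁻ x, (T x)^2 * W x := lintegral_mono key1
      _ ≤ ∫⁻ x, (ENNReal.ofReal s₁ * (∑' k, (v k x)^2)) * W x := by
          refine lintegral_mono fun x => mul_le_mul_left ?_ _
          calc (T x)^2 ≤ (∑' k, (u k)^2) * (∑' k, (v k x)^2) := key2 x
            _ = ENNReal.ofReal s₁ * (∑' k, (v k x)^2) := by rw [hS₁]
      _ = ENNReal.ofReal s₁ * ∫⁻ x, (∑' k, (v k x)^2) * W x := by
          rw [← lintegral_const_mul' _ _ ENNReal.ofReal_ne_top]
          exact lintegral_congr fun x => (mul_assoc _ _ _)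
      _ = ENNReal.ofReal s₁ * ∑' k, ∫⁻ x, (v k x)^2 * W x := by rw [hVW]
      _ ≤ ENNReal.ofReal s₁ * (ENNReal.ofReal (A * C₀^2 * cc) * ENNReal.ofReal s₁) :=
          mul_le_mul_right hVsum _
  -- final numeric comparison
  have e1 : (Real.sqrt A)^2 = A := Real.sq_sqrt hA.le
  have e2 : (Real.sqrt cc)^2 = cc := Real.sq_sqrt hcc.le
  have h1d : (0:ℝ) < 1 - d := by linarith
  have hRnn : 0 ≤ C * (2:ℝ)^((k₀:ℝ)*ε) * Real.sqrt cc := by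
    have : 0 ≤ C := le_of_lt (div_pos (by positivity) h1d)
    positivity
  have hfin : ENNReal.ofReal s₁ * (ENNReal.ofReal (A * C₀^2 * cc) * ENNReal.ofReal s₁)
      ≤ (ENNReal.ofReal (C * (2:ℝ)^((k₀:ℝ)*ε) * Real.sqrt cc)) ^ 2 := by
    rw [← ENNReal.ofReal_pow hRnn,
      ← ENNReal.ofReal_mul (by positivity : (0:ℝ) ≤ A * C₀^2 * cc),
      ← ENNReal.ofReal_mul hs₁0]
    apply ENNReal.ofReal_le_ofReal
    apply le_of_eq
    have hC2 : (C * (2:ℝ)^((k₀:ℝ)*ε) * Real.sqrt cc)^2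
        = C₀^2 * A / (1-d)^2 * ((2:ℝ)^((k₀:ℝ)*ε))^2 * cc := by
      rw [mul_pow, mul_pow, e2, hCdef, div_pow, mul_pow, e1]
    rw [hC2, hs₁def]
    field_simp
  have hXle2 : (∫⁻ x, ENNReal.ofReal
      ((∑' k : ℤ, ∑' i : ℕ, if k ≤ k₀ then b k i x else 0) ^ 2 * w x))
      ≤ (ENNReal.ofReal (C * (2:ℝ)^((k₀:ℝ)*ε) * Real.sqrt cc)) ^ 2 := le_trans hXle hfin
  calc (∫⁻ x, ENNReal.ofReal
      ((∑' k : ℤ, ∑' i : ℕ, if k ≤ k₀ then b k i x else 0) ^ 2 * w x)) ^ ((1:ℝ)/2)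
      ≤ ((ENNReal.ofReal (C * (2:ℝ)^((k₀:ℝ)*ε) * Real.sqrt cc)) ^ 2) ^ ((1:ℝ)/2) :=
        ENNReal.rpow_le_rpow hXle2 (by norm_num)
    _ = ENNReal.ofReal (C * (2:ℝ)^((k₀:ℝ)*ε) * Real.sqrt cc) := by
        rw [← ENNReal.rpow_natCast _ 2, ← ENNReal.rpow_mul]
        norm_num

end
end
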